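/- Let Ψ = (ψ_1,…,ψ_t) be a system of affine-linear forms on Z^d, no two of which are affinely related, and let r = dim of the span of the homogeneous parts ψ̇_1,…,ψ̇_t (over Q). Then the complexity of Ψ is at most t − r. -/

import Mathlib

/-- The affine-linear form `ψ_i(n) = ∑_j A i j * n j + c i` lies in the affine-linear span
(over `ℚ`) of the class of forms `{ψ_j : j ∈ S}`. -/
def inAffineSpan {t d : ℕ} (A : Fin t → Fin d → ℤ) (c : Fin t → ℤ)
    (S : Set (Fin t)) (i : Fin t) : Prop :=
  ∃ (lam : Fin t → ℚ) (mu : ℚ), (∀ j, j ∉ S → lam j = 0) ∧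
    ∀ n : Fin d → ℚ,
      (∑ j, (A i j : ℚ) * n j) + (c i : ℚ)
        = (∑ j, lam j * ((∑ k, (A j k : ℚ) * n k) + (c j : ℚ))) + mu

/-- The system has `i`-complexity at most `s`. -/
def iComplexityAtMost {t d : ℕ} (A : Fin t → Fin d → ℤ) (c : Fin t → ℤ)
    (i : Fin t) (s : ℕ) : Prop :=
  ∃ Cl : Fin (s + 1) → Set (Fin t),
    (∀ m, i ∉ Cl m) ∧ (∀ j, j ≠ i → ∃ m, j ∈ Cl m) ∧
    ∀ m, ¬ inAffineSpan A c (Cl m) i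

/-- Key reduction: if the homogeneous part of `ψ_i` is not in the linear span of the
homogeneous parts of the forms in `S`, then `ψ_i` is not in the affine span of `S`. -/
lemma not_inAffineSpan_of_not_mem_span {t d : ℕ} (A : Fin t → Fin d → ℤ) (c : Fin t → ℤ)
    (S : Set (Fin t)) (i : Fin t)
    (h : (fun k => (A i k : ℚ)) ∉
      Submodule.span ℚ ((fun j => fun k => (A j k : ℚ)) '' S)) :
    ¬ inAffineSpan A c S i := by
  rintro ⟨lam, mu, hlam, heq⟩
  apply h
  have h0 := heq 0
  simp only [Pi.zero_apply, mul_zero, Finset.sum_const_zero, zero_add] at h0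
  have hhom : ∀ n : Fin d → ℚ,
      (∑ j, (A i j : ℚ) * n j) = ∑ j, lam j * (∑ k, (A j k : ℚ) * n k) := by
    intro n
    have h1 := heq n
    have h2 : (∑ j, lam j * ((∑ k, (A j k : ℚ) * n k) + (c j : ℚ)))
        = (∑ j, lam j * (∑ k, (A j k : ℚ) * n k)) + ∑ j, lam j * (c j : ℚ) := by
      rw [← Finset.sum_add_distrib]
      exact Finset.sum_congr rfl fun j _ => by ring
    rw [h2] at h1
    linarith
  have hfun : (fun k => (A i k : ℚ)) = ∑ j, lam j • (fun k => (A j k : ℚ)) := by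
    funext k
    have hk := hhom (Pi.single k 1)
    have hL : (∑ j, (A i j : ℚ) * (Pi.single k 1 : Fin d → ℚ) j) = (A i k : ℚ) := by
      simp [Pi.single_apply, mul_ite]
    have hR : ∀ j, (∑ k', (A j k' : ℚ) * (Pi.single k 1 : Fin d → ℚ) k') = (A j k : ℚ) := by
      intro j; simp [Pi.single_apply, mul_ite]
    rw [hL] at hk
    simp only [hR] at hk
    rw [hk]
    simp [Finset.sum_apply]
  rw [hfun]
  refine Submodule.sum_mem _ fun j _ => ?_
  by_cases hj : j ∈ S
  · exact Submodule.smul_mem _ _ (Submodule.subset_span ⟨j, hj, rfl⟩)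
  · simp [hlam j hj]

/-- If no two of the non-constant forms are affinely related, and `r` is the dimension of the
`ℚ`-span of the homogeneous parts, then the complexity of the system is at most `t - r`:
every `i`-complexity is at most `t - r`. -/
theorem complexity_le_codim (t d : ℕ)
    (A : Fin t → Fin d → ℤ) (c : Fin t → ℤ) (hcon : ∀ i, A i ≠ 0)
    (hpar : ∀ i j, i ≠ j → ∀ a b : ℚ,
      (∀ k, a * (A i k : ℚ) = b * (A j k : ℚ)) → a = 0 ∧ b = 0) :
    ∀ i, iComplexityAtMost A c i
      (t - Module.finrank ℚ
        ↥(Submodule.span ℚ (Set.range fun i' : Fin t => fun k : Fin d => ((A i' k : ℚ))))) := by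
  classical
  intro i
  set f : Fin t → (Fin d → ℚ) := fun i' => fun k => ((A i' k : ℚ)) with hfdef
  set r := Module.finrank ℚ ↥(Submodule.span ℚ (Set.range f)) with hrdef
  have hf0 : ∀ j, f j ≠ 0 := by
    intro j hj
    apply hcon j
    funext k
    have := congrFun hj k
    simpa [f] using this
  have hfinj : Function.Injective f := by
    intro j j' h
    by_contra hne
    have := hpar j j' hne 1 1 (fun k => by simpa [f] using congrFun h k)
    simp at this
  -- extend {f i} to a basis b ⊆ range f of the span
  have hsi : LinearIndependent ℚ (fun x => (x : Fin d → ℚ) : ({f i} : Set (Fin d → ℚ)) → _) :=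
    (linearIndepOn_singleton_iff (R := ℚ) (v := id)).mpr (hf0 i)
  have hst : ({f i} : Set (Fin d → ℚ)) ⊆ Set.range f := by
    simp [Set.singleton_subset_iff]
  obtain ⟨b, hbt, hsb, htb, hli⟩ := exists_linearIndepOn_id_extension hsi hst
  have hbfin : b.Finite := (Set.finite_range f).subset hbt
  haveI : Fintype b := hbfin.fintype
  have hspan : Submodule.span ℚ b = Submodule.span ℚ (Set.range f) := by
    refine le_antisymm (Submodule.span_mono hbt) ?_
    rw [Submodule.span_le]; exact htb
  have hrcard : r = b.toFinset.card := by
    rw [hrdef, ← hspan]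
    exact finrank_span_set_eq_card hli
  -- the finset of indices whose form lies in b
  set T : Finset (Fin t) := Finset.univ.filter (fun j => f j ∈ b) with hTdef
  have hiT : i ∈ T := by
    simp only [hTdef, Finset.mem_filter, Finset.mem_univ, true_and]
    exact hsb rfl
  have hTimage : T.image f = b.toFinset := by
    ext x
    simp only [Finset.mem_image, hTdef, Finset.mem_filter, Finset.mem_univ, true_and,
      Set.mem_toFinset]
    constructor
    · rintro ⟨j, hj, rfl⟩; exact hj
    · intro hx
      obtain ⟨j, rfl⟩ := hbt hx
      exact ⟨j, hx, rfl⟩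
  have hTcard : T.card = r := by
    rw [hrcard, ← hTimage, Finset.card_image_of_injective _ hfinj]
  set R : Finset (Fin t) := Tᶜ with hRdef
  have hRcard : R.card = t - r := by
    rw [hRdef, Finset.card_compl, hTcard, Fintype.card_fin]
  -- classes
  set e := R.equivFin with hedef
  refine ⟨Fin.cons (↑(T.erase i)) (fun m => {(e.symm (Fin.cast hRcard.symm m) : Fin t)}),
    ?_, ?_, ?_⟩
  · intro m
    refine Fin.cases ?_ ?_ m
    · simp
    · intro m
      simp only [Fin.cons_succ, Set.mem_singleton_iff]
      intro hcontra
      have hmem : ((e.symm (Fin.cast hRcard.symm m) : Fin t)) ∈ R :=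
        (e.symm (Fin.cast hRcard.symm m)).2
      exact Finset.mem_compl.mp hmem (hcontra ▸ hiT)
  · intro j hj
    by_cases hjT : j ∈ T
    · refine ⟨0, ?_⟩
      simp only [Fin.cons_zero, Finset.coe_erase, Set.mem_diff, Set.mem_singleton_iff]
      exact ⟨hjT, hj⟩
    · have hjR : j ∈ R := Finset.mem_compl.mpr hjT
      refine ⟨(Fin.cast hRcard (e ⟨j, hjR⟩)).succ, ?_⟩
      simp
  · intro m
    refine Fin.cases ?_ ?_ m
    · -- the class T.erase i
      simp only [Fin.cons_zero]
      apply not_inAffineSpan_of_not_mem_span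
      -- f i ∉ span (b \ {f i}) and f '' (T.erase i) ⊆ b \ {f i}
      have hkey : f i ∉ Submodule.span ℚ (b \ {f i}) := by
        have hfib : f i ∈ b := hsb rfl
        have hx : (⟨f i, hfib⟩ : b) ∉ {y : b | (y : Fin d → ℚ) ≠ f i} := by simp
        have := LinearIndependent.notMem_span_image (v := (Subtype.val : b → (Fin d → ℚ))) hli hx
        have himg : (Subtype.val : b → (Fin d → ℚ)) '' {y : b | (y : Fin d → ℚ) ≠ f i}
            = b \ {f i} := by
          ext x
          simp only [Set.mem_image, Set.mem_setOf_eq, Set.mem_diff, Set.mem_singleton_iff]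
          constructor
          · rintro ⟨⟨y, hy⟩, hyne, rfl⟩; exact ⟨hy, hyne⟩
          · rintro ⟨hx, hxne⟩; exact ⟨⟨x, hx⟩, hxne, rfl⟩
        rwa [himg] at this
      intro hmem
      apply hkey
      refine Submodule.span_mono ?_ hmem
      rintro x ⟨j, hjmem, rfl⟩
      have hjmem' : j ∈ T.erase i := hjmem
      obtain ⟨hjne, hjT⟩ := Finset.mem_erase.1 hjmem'
      have hjb : f j ∈ b := by
        simpa [hTdef] using hjT
      exact ⟨hjb, fun hcontra => hjne (hfinj hcontra)⟩
    · -- singleton classes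
      intro m
      simp only [Fin.cons_succ]
      apply not_inAffineSpan_of_not_mem_span
      set j := (e.symm (Fin.cast hRcard.symm m) : Fin t) with hjdef
      have hjR : j ∈ R := (e.symm (Fin.cast hRcard.symm m)).2
      have hjne : i ≠ j := fun hcontra => Finset.mem_compl.mp hjR (hcontra ▸ hiT)
      intro hmem
      rw [Set.image_singleton, Submodule.mem_span_singleton] at hmem
      obtain ⟨a, ha⟩ := hmem
      have := hpar i j hjne 1 a (fun k => by
        have := congrFun ha k
        simp only [Pi.smul_apply, smul_eq_mul, f] at this
        simpa [f] using this.symm)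
      simp at this
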